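/- For all natural numbers k ≥ 1 and n with k ≤ n, the homogeneous symmetric polynomial h_{k}(x_1,...,x_{n-k+1}) equals the alternating sum over i from 1 to k of (-1)^{i+1} · e_i(x_1,...,x_n) · h_{k-i}(x_1,...,x_{n-k+1}). -/

import Mathlib

open MvPolynomial Finset

noncomputable def esymb (R : Type) [CommRing R] (n m k : ℕ) : MvPolynomial (Fin n) R :=
  ∑ S ∈ (Finset.univ.filter (fun i : Fin n => (i : ℕ) < m)).powersetCard k, ∏ i ∈ S, X i

noncomputable def hsymb (R : Type) [CommRing R] (n m k : ℕ) : MvPolynomial (Fin n) R :=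
  ∑ μ ∈ (Finset.univ.filter (fun i : Fin n => (i : ℕ) < m)).sym k,
    ((μ : Multiset (Fin n)).map X).prod

variable (R : Type) [CommRing R] (n : ℕ)

lemma esymb_zero (m : ℕ) : esymb R n m 0 = 1 := by
  simp [esymb]

lemma hsymb_zero (m : ℕ) : hsymb R n m 0 = 1 := by
  have : ((∅ : Sym (Fin n) 0) : Multiset (Fin n)) = 0 := rfl
  simp [hsymb, this]

lemma filter_zero : (Finset.univ.filter (fun i : Fin n => (i : ℕ) < 0)) = ∅ := by
  simp

lemma esymb_nil (k : ℕ) (hk : 1 ≤ k) : esymb R n 0 k = 0 := by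
  obtain ⟨k, rfl⟩ := Nat.exists_eq_add_of_le hk
  rw [esymb, filter_zero, Finset.powersetCard_eq_empty.2 (by simp), Finset.sum_empty]

lemma hsymb_nil (k : ℕ) (hk : 1 ≤ k) : hsymb R n 0 k = 0 := by
  obtain ⟨k, rfl⟩ := Nat.exists_eq_add_of_le hk
  rw [hsymb, filter_zero, Finset.sym_eq_empty.2 ⟨by omega, rfl⟩, Finset.sum_empty]

lemma filter_succ (m : ℕ) (hm : m < n) :
    (Finset.univ.filter (fun i : Fin n => (i : ℕ) < m + 1)) =
      insert ⟨m, hm⟩ (Finset.univ.filter (fun i : Fin n => (i : ℕ) < m)) := by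
  ext i
  simp [Nat.lt_succ_iff_lt_or_eq, Fin.ext_iff, or_comm]
  exact le_iff_eq_or_lt

lemma notmem_filter (m : ℕ) (hm : m < n) :
    (⟨m, hm⟩ : Fin n) ∉ (Finset.univ.filter (fun i : Fin n => (i : ℕ) < m)) := by
  simp

lemma esymb_rec (m k : ℕ) (hm : m < n) :
    esymb R n (m + 1) (k + 1) = esymb R n m (k + 1) + X ⟨m, hm⟩ * esymb R n m k := by
  classical
  rw [esymb, filter_succ n m hm,
    Finset.powersetCard_succ_insert (notmem_filter n m hm),
    Finset.sum_union (by
      rw [Finset.disjoint_left]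
      rintro S hS hS'
      obtain ⟨T, hT, rfl⟩ := Finset.mem_image.1 hS'
      have : (⟨m, hm⟩ : Fin n) ∈ insert (⟨m, hm⟩ : Fin n) T := Finset.mem_insert_self _ _
      have hsub := Finset.mem_powersetCard.1 hS |>.1
      exact notmem_filter n m hm (hsub this)),
    Finset.sum_image (by
      intro S hS T hT hST
      have hmS : (⟨m, hm⟩ : Fin n) ∉ S := fun h =>
        notmem_filter n m hm ((Finset.mem_powersetCard.1 hS).1 h)
      have hmT : (⟨m, hm⟩ : Fin n) ∉ T := fun h =>
        notmem_filter n m hm ((Finset.mem_powersetCard.1 hT).1 h)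
      exact (Finset.insert_erase_invOn.2.injOn.eq_iff (by simpa using hmS) (by simpa using hmT)).mp hST)]
  rw [esymb, esymb, Finset.mul_sum]
  congr 1
  refine Finset.sum_congr rfl fun S hS => ?_
  have hmS : (⟨m, hm⟩ : Fin n) ∉ S := fun h =>
    notmem_filter n m hm ((Finset.mem_powersetCard.1 hS).1 h)
  rw [Finset.prod_insert hmS]

lemma sym_insert {α : Type*} [DecidableEq α] (a : α) (s : Finset α) (ha : a ∉ s) (k : ℕ) :
    (insert a s).sym (k + 1) = s.sym (k + 1) ∪ ((insert a s).sym k).image (Sym.cons a) := by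
  ext μ
  simp only [Finset.mem_union, Finset.mem_sym_iff, Finset.mem_insert, Finset.mem_image]
  constructor
  · intro h
    by_cases haμ : a ∈ μ
    · right
      refine ⟨μ.erase a haμ, ?_, Sym.cons_erase haμ⟩
      intro b hb
      have hbμ : b ∈ μ := Multiset.mem_of_mem_erase (by exact hb)
      simpa using h b hbμ
    · left
      intro b hb
      rcases h b hb with rfl | hbs
      · exact absurd hb haμ
      · exact hbs
  · rintro (h | ⟨μ', hμ', rfl⟩)
    · exact fun b hb => Or.inr (h b hb)
    · intro b hb
      rw [Sym.mem_cons] at hb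
      rcases hb with rfl | hb
      · exact Or.inl rfl
      · simpa using hμ' b hb

lemma hsymb_rec (m k : ℕ) (hm : m < n) :
    hsymb R n (m + 1) (k + 1) = hsymb R n m (k + 1) + X ⟨m, hm⟩ * hsymb R n (m + 1) k := by
  classical
  rw [hsymb, filter_succ n m hm,
    sym_insert _ _ (notmem_filter n m hm),
    Finset.sum_union (by
      rw [Finset.disjoint_left]
      rintro μ hμ hμ'
      obtain ⟨ν, hν, rfl⟩ := Finset.mem_image.1 hμ'
      have hmem : (⟨m, hm⟩ : Fin n) ∈ Sym.cons ⟨m, hm⟩ ν := Sym.mem_cons_self _ ν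
      exact notmem_filter n m hm (Finset.mem_sym_iff.1 hμ _ hmem)),
    Finset.sum_image (fun μ _ ν _ h => (Sym.cons_inj_right _ μ ν).1 h)]
  rw [hsymb, hsymb, filter_succ n m hm, Finset.mul_sum]
  congr 1
  refine Finset.sum_congr rfl fun μ _ => ?_
  rw [Sym.coe_cons, Multiset.map_cons, Multiset.prod_cons]

noncomputable def Ssum (R : Type) [CommRing R] (n a b k : ℕ) : MvPolynomial (Fin n) R :=
  ∑ i ∈ Finset.range (k + 1),
    (-1 : MvPolynomial (Fin n) R) ^ i * esymb R n a i * hsymb R n b (k - i)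

lemma S_b_rec (a m k : ℕ) (hm : m < n) :
    Ssum R n a (m + 1) (k + 1) =
      Ssum R n a m (k + 1) + X ⟨m, hm⟩ * Ssum R n a (m + 1) k := by
  have key : ∀ i ∈ Finset.range (k + 1),
      (-1 : MvPolynomial (Fin n) R) ^ i * esymb R n a i * hsymb R n (m + 1) (k + 1 - i) =
        (-1) ^ i * esymb R n a i * hsymb R n m (k + 1 - i) +
          X ⟨m, hm⟩ * ((-1) ^ i * esymb R n a i * hsymb R n (m + 1) (k - i)) := by
    intro i hi
    have hik : i ≤ k := Nat.lt_succ_iff.1 (Finset.mem_range.1 hi)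
    have h1 : k + 1 - i = (k - i) + 1 := by omega
    rw [h1, hsymb_rec R n m (k - i) hm]
    ring
  rw [Ssum, Ssum, Ssum,
    Finset.sum_range_succ
      (fun i => (-1 : MvPolynomial (Fin n) R) ^ i * esymb R n a i * hsymb R n (m + 1) (k + 1 - i)),
    Finset.sum_range_succ
      (fun i => (-1 : MvPolynomial (Fin n) R) ^ i * esymb R n a i * hsymb R n m (k + 1 - i)),
    Finset.sum_congr rfl key, Finset.sum_add_distrib, ← Finset.mul_sum]
  simp only [Nat.sub_self, hsymb_zero]
  ring

lemma S_a_rec (b m k : ℕ) (hm : m < n) :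
    Ssum R n (m + 1) b (k + 1) =
      Ssum R n m b (k + 1) - X ⟨m, hm⟩ * Ssum R n m b k := by
  have key : ∀ j ∈ Finset.range (k + 1),
      (-1 : MvPolynomial (Fin n) R) ^ (j + 1) * esymb R n (m + 1) (j + 1) * hsymb R n b (k + 1 - (j + 1)) =
        (-1) ^ (j + 1) * esymb R n m (j + 1) * hsymb R n b (k + 1 - (j + 1)) -
          X ⟨m, hm⟩ * ((-1) ^ j * esymb R n m j * hsymb R n b (k - j)) := by
    intro j hj
    have h1 : k + 1 - (j + 1) = k - j := by omega
    rw [esymb_rec R n m j hm, h1]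
    ring
  rw [Ssum, Ssum, Ssum,
    Finset.sum_range_succ'
      (fun i => (-1 : MvPolynomial (Fin n) R) ^ i * esymb R n (m + 1) i * hsymb R n b (k + 1 - i)),
    Finset.sum_range_succ'
      (fun i => (-1 : MvPolynomial (Fin n) R) ^ i * esymb R n m i * hsymb R n b (k + 1 - i)),
    Finset.sum_congr rfl key, Finset.sum_sub_distrib, ← Finset.mul_sum]
  simp only [pow_zero, esymb_zero, Nat.sub_zero]
  ring

lemma S_nil (k : ℕ) : Ssum R n 0 0 (k + 1) = 0 := by
  rw [Ssum]
  refine Finset.sum_eq_zero fun i hi => ?_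
  rcases Nat.eq_zero_or_pos i with rfl | hi1
  · rw [hsymb_nil R n (k + 1 - 0) (by omega)]
    ring
  · rw [esymb_nil R n i hi1]
    ring

lemma S_diag (m : ℕ) (hm : m ≤ n) (k : ℕ) : Ssum R n m m (k + 1) = 0 := by
  induction m with
  | zero => exact S_nil R n k
  | succ m ih =>
    have hm' : m < n := by omega
    rw [S_a_rec R n (m + 1) m k hm', S_b_rec R n m m k hm', ih (by omega)]
    ring

lemma S_top : ∀ d m k : ℕ, m + d = n → n + 1 ≤ m + k → Ssum R n n m k = 0 := by
  intro d
  induction d with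
  | zero =>
    intro m k hd hk
    obtain ⟨k, rfl⟩ : ∃ k', k = k' + 1 := ⟨k - 1, by omega⟩
    have hmn : m = n := by omega
    rw [hmn]
    exact S_diag R n n le_rfl k
  | succ d ih =>
    intro m k hd hk
    have hm : m < n := by omega
    obtain ⟨k, rfl⟩ : ∃ k', k = k' + 1 := ⟨k - 1, by omega⟩
    have h1 := S_b_rec R n n m k hm
    have h2 := ih (m + 1) (k + 1) (by omega) (by omega)
    have h3 := ih (m + 1) k (by omega) (by omega)
    rw [h2, h3] at h1
    linear_combination -h1

theorem stmt0 (R : Type) [CommRing R] (n k : ℕ) (hk : 1 ≤ k) (hkn : k ≤ n) :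
    hsymb R n (n + 1 - k) k =
      ∑ i ∈ Finset.Icc 1 k, (-1 : MvPolynomial (Fin n) R) ^ (i + 1) *
        esymb R n n i * hsymb R n (n + 1 - k) (k - i) := by
  have h0 : Ssum R n n (n + 1 - k) k = 0 := S_top R n (k - 1) (n + 1 - k) k (by omega) (by omega)
  obtain ⟨k', rfl⟩ : ∃ k', k = k' + 1 := ⟨k - 1, by omega⟩
  rw [Ssum, Finset.sum_range_succ'] at h0
  simp only [pow_zero, esymb_zero, Nat.sub_zero, one_mul, mul_one] at h0
  have hIcc : Finset.Icc 1 (k' + 1) = Finset.Ico 1 (k' + 2) := by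
    exact (Finset.Ico_add_one_right_eq_Icc ..).symm
  rw [hIcc, Finset.sum_Ico_eq_sum_range]
  have hE : hsymb R n (n + 1 - (k' + 1)) (k' + 1) =
      -∑ i ∈ Finset.range (k' + 1),
        (-1 : MvPolynomial (Fin n) R) ^ (i + 1) * esymb R n n (i + 1) *
          hsymb R n (n + 1 - (k' + 1)) (k' + 1 - (i + 1)) := by
    linear_combination h0
  rw [hE, ← Finset.sum_neg_distrib]
  refine Finset.sum_congr (by norm_num) fun i _ => ?_
  have h1 : 1 + i = i + 1 := by omega
  rw [h1]
  ring
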